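/- The h-deformed algebra H_n (finitely many generators) has no zero divisors, i.e., it is a domain. -/

import Mathlib

/-- Generators of the `h`-deformed algebra: `(i, false)` is `x_i`, `(i, true)` is `y_i`. -/
abbrev HGen (n : ℕ) := Fin (n + 1) × Bool

/-- The defining relations of the `h`-deformed algebra `H_n`. -/
inductive HRel (h : ℂ) (n : ℕ) :
    FreeAlgebra ℂ (HGen n) → FreeAlgebra ℂ (HGen n) → Prop
  | diag (i : Fin (n + 1)) :
      HRel h n (FreeAlgebra.ι ℂ (i, false) * FreeAlgebra.ι ℂ (i, true))
        (FreeAlgebra.ι ℂ (i, true) * FreeAlgebra.ι ℂ (i, false) +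
          h • (FreeAlgebra.ι ℂ (i, true) * FreeAlgebra.ι ℂ (i, true)))
  | xy {i j : Fin (n + 1)} (hij : i < j) :
      HRel h n (FreeAlgebra.ι ℂ (j, false) * FreeAlgebra.ι ℂ (i, true))
        (FreeAlgebra.ι ℂ (i, true) * FreeAlgebra.ι ℂ (j, false) +
          h • (FreeAlgebra.ι ℂ (i, true) * FreeAlgebra.ι ℂ (j, true)))
  | yx {i j : Fin (n + 1)} (hij : i < j) :
      HRel h n (FreeAlgebra.ι ℂ (j, true) * FreeAlgebra.ι ℂ (i, false))
        (FreeAlgebra.ι ℂ (i, false) * FreeAlgebra.ι ℂ (j, true) -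
          h • (FreeAlgebra.ι ℂ (i, true) * FreeAlgebra.ι ℂ (j, true)))
  | yy {i j : Fin (n + 1)} (hij : i < j) :
      HRel h n (FreeAlgebra.ι ℂ (j, true) * FreeAlgebra.ι ℂ (i, true))
        (FreeAlgebra.ι ℂ (i, true) * FreeAlgebra.ι ℂ (j, true))
  | xx {i j : Fin (n + 1)} (hij : i < j) :
      HRel h n (FreeAlgebra.ι ℂ (j, false) * FreeAlgebra.ι ℂ (i, false))
        (FreeAlgebra.ι ℂ (i, false) * FreeAlgebra.ι ℂ (j, false) -
          h • (FreeAlgebra.ι ℂ (i, false) * FreeAlgebra.ι ℂ (j, true)) +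
          h • (FreeAlgebra.ι ℂ (i, true) * FreeAlgebra.ι ℂ (j, false)) +
          (h * h) • (FreeAlgebra.ι ℂ (i, true) * FreeAlgebra.ι ℂ (j, true)))

/-- The `h`-deformed algebra `H_n` on generators `x_0, y_0, ..., x_n, y_n`. -/
abbrev HAlg (h : ℂ) (n : ℕ) := RingQuot (HRel h n)

namespace HProof

variable (h : ℂ) (n : ℕ)

noncomputable def Yg (i : Fin (n + 1)) : HAlg h n :=
  RingQuot.mkAlgHom ℂ (HRel h n) (FreeAlgebra.ι ℂ (i, true))

noncomputable def Xg (i : Fin (n + 1)) : HAlg h n :=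
  RingQuot.mkAlgHom ℂ (HRel h n) (FreeAlgebra.ι ℂ (i, false))

variable {h n}

lemma comm_yy (s t : Fin (n+1)) : Yg h n s * Yg h n t = Yg h n t * Yg h n s := by
  rcases lt_trichotomy s t with hst | rfl | hst
  · have := RingQuot.mkAlgHom_rel ℂ (HRel.yy (h := h) hst)
    simpa [Yg, map_mul] using this.symm
  · rfl
  · have := RingQuot.mkAlgHom_rel ℂ (HRel.yy (h := h) hst)
    simpa [Yg, map_mul] using this

lemma x_mul_y (t s : Fin (n+1)) :
    Xg h n t * Yg h n s = Yg h n s * Xg h n t + h • (Yg h n t * Yg h n s) := by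
  rcases lt_trichotomy s t with hst | rfl | hst
  · have this := RingQuot.mkAlgHom_rel ℂ (HRel.xy (h := h) hst)
    simp only [map_mul, map_add, map_smul] at this
    change Xg h n t * Yg h n s = Yg h n s * Xg h n t + h • (Yg h n s * Yg h n t) at this
    rw [this, comm_yy s t]
  · have := RingQuot.mkAlgHom_rel ℂ (HRel.diag (h := h) s)
    simpa [Yg, Xg, map_mul, map_add, map_smul] using this
  · have := RingQuot.mkAlgHom_rel ℂ (HRel.yx (h := h) hst)
    simp only [map_mul, map_sub, map_smul] at this
    change Yg h n s * Xg h n t = Xg h n t * Yg h n s - h • (Yg h n t * Yg h n s) at this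
    rw [this]; abel

lemma comm_xx {k i : Fin (n+1)} (hki : k < i) :
    Xg h n i * Xg h n k = Xg h n k * Xg h n i - h • (Xg h n k * Yg h n i)
      + h • (Yg h n k * Xg h n i) + (h * h) • (Yg h n k * Yg h n i) := by
  have this := RingQuot.mkAlgHom_rel ℂ (HRel.xx (h := h) hki)
  simp only [map_mul, map_add, map_sub, map_smul] at this
  exact this

end HProof
namespace HProof

variable {h : ℂ} {n : ℕ}

/-- `ee k` is the exponent vector with a single 1 at `k`. -/
def ee (k : Fin (n+1)) : Fin (n+1) → ℕ := Pi.single k 1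

lemma ee_same (k : Fin (n+1)) : ee k k = 1 := Pi.single_eq_same k 1
lemma ee_ne {k t : Fin (n+1)} (hkt : t ≠ k) : ee k t = 0 := Pi.single_eq_of_ne hkt 1

/-- Ordered product of `g t ^ c t` over indices `t` with `n+1-j ≤ t`, in increasing order. -/
noncomputable def gF (g : Fin (n+1) → HAlg h n) (c : Fin (n+1) → ℕ) : ℕ → HAlg h n
  | 0 => 1
  | j+1 => g ⟨n - j, by omega⟩ ^ c ⟨n - j, by omega⟩ * gF g c j

lemma gF_congr (g : Fin (n+1) → HAlg h n) {c c' : Fin (n+1) → ℕ} :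
    ∀ j, (∀ t : Fin (n+1), n+1-j ≤ (t : ℕ) → c t = c' t) → gF g c j = gF g c' j := by
  intro j
  induction j with
  | zero => intro _; rfl
  | succ j ih =>
    intro hcc
    have h1 : c ⟨n - j, by omega⟩ = c' ⟨n - j, by omega⟩ := hcc _ (by
      show n + 1 - (j+1) ≤ n - j
      omega)
    rw [gF, gF, h1, ih (fun t ht => hcc t (by omega))]

lemma gF_zero (g : Fin (n+1) → HAlg h n) : ∀ j, gF g (fun _ => 0) j = 1 := by
  intro j
  induction j with
  | zero => rfl
  | succ j ih => rw [gF, ih, pow_zero, one_mul]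

lemma gF_insert_comm (g : Fin (n+1) → HAlg h n) (c : Fin (n+1) → ℕ) (k : Fin (n+1))
    (hcomm : ∀ t, Commute (g k) (g t)) :
    ∀ j, j ≤ n+1 → n+1-j ≤ (k : ℕ) →
      gF g (c + ee k) j = g k * gF g c j := by
  intro j
  induction j with
  | zero => intro _ hk; exact absurd hk (by omega)
  | succ j ih =>
    intro hj hk
    rcases eq_or_ne (⟨n - j, by omega⟩ : Fin (n+1)) k with hm | hm
    · have h1 : (c + ee k) ⟨n - j, by omega⟩ = c ⟨n - j, by omega⟩ + 1 := by
        simp [hm, ee_same, Pi.add_apply]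
      have h2 : gF g (c + ee k) j = gF g c j := by
        refine gF_congr g j (fun t ht => ?_)
        have htk : t ≠ k := by
          intro hrf; rw [← hm] at hrf
          have := congrArg Fin.val hrf
          simp at this; omega
        simp [Pi.add_apply, ee_ne htk]
      rw [gF, gF, h1, h2, pow_succ', hm, mul_assoc]
    · have hval : (n : ℕ) - j ≠ (k : ℕ) := by
        intro hv; exact hm (Fin.ext (by simpa using hv))
      have h1 : (c + ee k) ⟨n - j, by omega⟩ = c ⟨n - j, by omega⟩ := by
        have hne : (⟨n - j, by omega⟩ : Fin (n+1)) ≠ k := hm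
        simp [Pi.add_apply, ee_ne hne]
      rw [gF, gF, h1, ih (by omega) (by omega), ← mul_assoc, ← mul_assoc]
      congr 1
      exact ((hcomm _).pow_right _).symm

lemma gF_insert_min (g : Fin (n+1) → HAlg h n) (c : Fin (n+1) → ℕ) (k : Fin (n+1))
    (hc : ∀ t : Fin (n+1), (t : ℕ) < (k : ℕ) → c t = 0) :
    ∀ j, j ≤ n+1 → n+1-j ≤ (k : ℕ) →
      gF g (c + ee k) j = g k * gF g c j := by
  intro j
  induction j with
  | zero => intro _ hk; exact absurd hk (by omega)
  | succ j ih =>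
    intro hj hk
    rcases eq_or_ne (⟨n - j, by omega⟩ : Fin (n+1)) k with hm | hm
    · have h1 : (c + ee k) ⟨n - j, by omega⟩ = c ⟨n - j, by omega⟩ + 1 := by
        simp [hm, ee_same, Pi.add_apply]
      have h2 : gF g (c + ee k) j = gF g c j := by
        refine gF_congr g j (fun t ht => ?_)
        have htk : t ≠ k := by
          intro hrf; rw [← hm] at hrf
          have := congrArg Fin.val hrf
          simp at this; omega
        simp [Pi.add_apply, ee_ne htk]
      rw [gF, gF, h1, h2, pow_succ', hm, mul_assoc]
    · have hval : (n : ℕ) - j < (k : ℕ) := by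
        have : (n : ℕ) - j ≠ (k : ℕ) := by
          intro hv; exact hm (Fin.ext (by simpa using hv))
        omega
      have h0 : c ⟨n - j, by omega⟩ = 0 := hc _ (by simpa using hval)
      have h1 : (c + ee k) ⟨n - j, by omega⟩ = 0 := by
        have hne : (⟨n - j, by omega⟩ : Fin (n+1)) ≠ k := hm
        simp [Pi.add_apply, h0, ee_ne hne]
      rw [gF, gF, h0, h1, pow_zero, one_mul, one_mul, ih (by omega) (by omega)]

variable (h n) in
noncomputable def yP (a : Fin (n+1) → ℕ) : HAlg h n := gF (Yg h n) a (n+1)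

variable (h n) in
noncomputable def xP (b : Fin (n+1) → ℕ) : HAlg h n := gF (Xg h n) b (n+1)

variable (h n) in
noncomputable def Mon (a b : Fin (n+1) → ℕ) : HAlg h n := yP h n a * xP h n b

lemma yP_insert (a : Fin (n+1) → ℕ) (k : Fin (n+1)) :
    yP h n (a + ee k) = Yg h n k * yP h n a :=
  gF_insert_comm _ a k (fun t => comm_yy k t) (n+1) le_rfl (by omega)

lemma xP_insert (b : Fin (n+1) → ℕ) (k : Fin (n+1))
    (hb : ∀ t : Fin (n+1), (t : ℕ) < (k : ℕ) → b t = 0) :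
    xP h n (b + ee k) = Xg h n k * xP h n b :=
  gF_insert_min _ b k hb (n+1) le_rfl (by omega)

lemma yP_zero : yP h n (fun _ => 0) = 1 := gF_zero _ _
lemma xP_zero : xP h n (fun _ => 0) = 1 := gF_zero _ _

lemma yP_single (i : Fin (n+1)) : yP h n (ee i) = Yg h n i := by
  have : (ee i : Fin (n+1) → ℕ) = (fun _ => 0) + ee i := by funext t; simp
  rw [this, yP_insert, yP_zero, mul_one]

lemma xP_single (i : Fin (n+1)) : xP h n (ee i) = Xg h n i := by
  have : (ee i : Fin (n+1) → ℕ) = (fun _ => 0) + ee i := by funext t; simp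
  rw [this, xP_insert _ _ (fun _ _ => rfl), xP_zero, mul_one]

end HProof
namespace HProof

variable {h : ℂ} {n : ℕ}

lemma x_mul_ypow (t s : Fin (n+1)) :
    ∀ m : ℕ, ∃ c : ℂ, Xg h n t * Yg h n s ^ m
      = Yg h n s ^ m * Xg h n t + c • (Yg h n t * Yg h n s ^ m) := by
  intro m
  induction m with
  | zero => exact ⟨0, by simp⟩
  | succ m ih =>
    obtain ⟨c, hc⟩ := ih
    refine ⟨c + h, ?_⟩
    rw [pow_succ', ← mul_assoc, x_mul_y, add_mul, mul_assoc, hc]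
    have hcm : Yg h n s * (c • (Yg h n t * Yg h n s ^ m))
        = c • (Yg h n t * (Yg h n s * Yg h n s ^ m)) := by
      rw [mul_smul_comm, ← mul_assoc, comm_yy s t, mul_assoc]
    have hsm : (h • (Yg h n t * Yg h n s)) * Yg h n s ^ m
        = h • (Yg h n t * (Yg h n s * Yg h n s ^ m)) := by
      rw [smul_mul_assoc, mul_assoc]
    rw [mul_add, hcm, hsm, ← pow_succ', add_smul, ← mul_assoc, ← pow_succ']
    abel

lemma x_mul_gFy (t : Fin (n+1)) (a : Fin (n+1) → ℕ) :
    ∀ j, ∃ c : ℂ, Xg h n t * gF (Yg h n) a j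
      = gF (Yg h n) a j * Xg h n t + c • (Yg h n t * gF (Yg h n) a j) := by
  intro j
  induction j with
  | zero => exact ⟨0, by simp [gF]⟩
  | succ j ih =>
    obtain ⟨c, hc⟩ := ih
    obtain ⟨c', hc'⟩ := x_mul_ypow (h := h) t ⟨n - j, by omega⟩ (a ⟨n - j, by omega⟩)
    refine ⟨c + c', ?_⟩
    set Ym := Yg h n ⟨n - j, by omega⟩ ^ a ⟨n - j, by omega⟩ with hYm
    set R := gF (Yg h n) a j with hR
    have comm0 : Commute (Yg h n t) (Yg h n ⟨n - j, by omega⟩) := comm_yy t _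
    have comm1 : Commute (Yg h n t) Ym := comm0.pow_right _
    calc Xg h n t * (Ym * R) = (Xg h n t * Ym) * R := by rw [mul_assoc]
      _ = (Ym * Xg h n t + c' • (Yg h n t * Ym)) * R := by rw [hc']
      _ = Ym * (Xg h n t * R) + c' • (Yg h n t * Ym * R) := by
          rw [add_mul, mul_assoc, smul_mul_assoc]
      _ = Ym * (R * Xg h n t + c • (Yg h n t * R)) + c' • (Yg h n t * (Ym * R)) := by
          rw [hc, mul_assoc]
      _ = (Ym * R) * Xg h n t + c • (Ym * (Yg h n t * R)) + c' • (Yg h n t * (Ym * R)) := by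
          rw [mul_add, mul_assoc, mul_smul_comm]
      _ = (Ym * R) * Xg h n t + (c + c') • (Yg h n t * (Ym * R)) := by
          rw [show Ym * (Yg h n t * R) = Yg h n t * (Ym * R) by
            rw [← mul_assoc, ← comm1.eq, mul_assoc], add_smul]
          abel
    
lemma x_mul_yP (t : Fin (n+1)) (a : Fin (n+1) → ℕ) :
    ∃ c : ℂ, Xg h n t * yP h n a
      = yP h n a * Xg h n t + c • (Yg h n t * yP h n a) :=
  x_mul_gFy t a (n+1)

variable (h n) in
def genSet (ℓ : ℕ) : Set (HAlg h n) :=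
  {z | ∃ a b : Fin (n+1) → ℕ, (∀ t : Fin (n+1), b t ≠ 0 → ℓ ≤ (t : ℕ)) ∧ z = Mon h n a b}

variable (h n) in
noncomputable def SpanM (ℓ : ℕ) : Submodule ℂ (HAlg h n) := Submodule.span ℂ (genSet h n ℓ)

lemma SpanM_mono {ℓ ℓ' : ℕ} (hll : ℓ' ≤ ℓ) : SpanM h n ℓ ≤ SpanM h n ℓ' := by
  apply Submodule.span_mono
  rintro z ⟨a, b, hb, rfl⟩
  exact ⟨a, b, fun t ht => le_trans hll (hb t ht), rfl⟩

lemma mon_mem {ℓ : ℕ} (a b : Fin (n+1) → ℕ) (hb : ∀ t : Fin (n+1), b t ≠ 0 → ℓ ≤ (t : ℕ)) :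
    Mon h n a b ∈ SpanM h n ℓ :=
  Submodule.subset_span ⟨a, b, hb, rfl⟩

lemma mul_span_closed {u : HAlg h n} {ℓ ℓ' : ℕ}
    (hu : ∀ z ∈ genSet h n ℓ, u * z ∈ SpanM h n ℓ') :
    ∀ z ∈ SpanM h n ℓ, u * z ∈ SpanM h n ℓ' := by
  intro z hz
  induction hz using Submodule.span_induction with
  | mem z hz => exact hu z hz
  | zero => simpa using (SpanM h n ℓ').zero_mem
  | add x y _ _ hx hy => rw [mul_add]; exact (SpanM h n ℓ').add_mem hx hy
  | smul c x _ hx => rw [mul_smul_comm]; exact (SpanM h n ℓ').smul_mem c hx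

lemma y_mul_mon (k : Fin (n+1)) (a b : Fin (n+1) → ℕ) :
    Yg h n k * Mon h n a b = Mon h n (a + ee k) b := by
  rw [Mon, Mon, yP_insert, mul_assoc]

lemma y_mul_span (k : Fin (n+1)) {ℓ : ℕ} :
    ∀ z ∈ SpanM h n ℓ, Yg h n k * z ∈ SpanM h n ℓ := by
  apply mul_span_closed
  rintro z ⟨a, b, hb, rfl⟩
  rw [y_mul_mon]
  exact mon_mem _ _ hb

lemma x_mul_span_min (k : Fin (n+1)) :
    ∀ z ∈ SpanM h n (k : ℕ), Xg h n k * z ∈ SpanM h n (k : ℕ) := by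
  apply mul_span_closed
  rintro z ⟨a, b, hb, rfl⟩
  obtain ⟨c, hc⟩ := x_mul_yP (h := h) k a
  have hxb : Xg h n k * xP h n b = xP h n (b + ee k) :=
    (xP_insert b k (fun t ht => by
      by_contra hbt
      exact absurd (hb t hbt) (by omega))).symm
  rw [Mon, ← mul_assoc, hc, add_mul, mul_assoc, hxb, smul_mul_assoc, mul_assoc]
  refine (SpanM h n _).add_mem ?_ ?_
  · exact mon_mem a (b + ee k) (fun t ht => by
      by_cases htk : t = k
      · subst htk; exact le_rfl
      · refine hb t ?_
        simpa [Pi.add_apply, ee_ne htk] using ht)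
  · refine (SpanM h n _).smul_mem c ?_
    rw [show yP h n a * xP h n b = Mon h n a b from rfl, y_mul_mon]
    exact mon_mem _ _ hb

end HProof
namespace HProof

variable {h : ℂ} {n : ℕ}

lemma sum_ee (k : Fin (n+1)) : (∑ t : Fin (n+1), ee k t) = 1 := by
  simpa [ee] using Finset.sum_pi_single' k 1 Finset.univ

lemma x_mul_xP_mem :
    ∀ N : ℕ, ∀ (ℓ : ℕ) (i : Fin (n+1)) (b : Fin (n+1) → ℕ),
      ℓ ≤ (i : ℕ) → (∀ t : Fin (n+1), b t ≠ 0 → ℓ ≤ (t : ℕ)) →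
      (∑ t : Fin (n+1), b t) = N →
      Xg h n i * xP h n b ∈ SpanM h n ℓ := by
  intro N
  induction N using Nat.strong_induction_on with
  | _ N IH =>
    intro ℓ i b hℓi hbℓ hsum
    by_cases hA : ∀ t : Fin (n+1), (t : ℕ) < (i : ℕ) → b t = 0
    · rw [← xP_insert b i hA]
      have : xP h n (b + ee i) = Mon h n (fun _ => 0) (b + ee i) := by
        rw [Mon, yP_zero, one_mul]
      rw [this]
      refine mon_mem _ _ (fun t ht => ?_)
      by_cases htk : t = i
      · subst htk; exact hℓi
      · exact hbℓ t (by simpa [Pi.add_apply, ee_ne htk] using ht)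
    · push_neg at hA
      obtain ⟨t₀, ht₀i, ht₀⟩ := hA
      -- minimal element of support of b
      have hne : (Finset.univ.filter (fun t : Fin (n+1) => b t ≠ 0)).Nonempty :=
        ⟨t₀, by simp [ht₀]⟩
      set k := (Finset.univ.filter (fun t : Fin (n+1) => b t ≠ 0)).min' hne with hk
      have hbk : b k ≠ 0 := by
        have := (Finset.univ.filter (fun t : Fin (n+1) => b t ≠ 0)).min'_mem hne
        simpa using this
      have hkmin : ∀ t : Fin (n+1), b t ≠ 0 → k ≤ t := by
        intro t ht
        exact Finset.min'_le _ _ (by simp [ht])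
      have hki : (k : ℕ) < (i : ℕ) := lt_of_le_of_lt (hkmin t₀ ht₀) ht₀i
      have hℓk : ℓ ≤ (k : ℕ) := hbℓ k hbk
      set b' : Fin (n+1) → ℕ := fun t => b t - ee k t with hb'
      have hbeq : b = b' + ee k := by
        funext t
        by_cases htk : t = k
        · subst htk; simp [hb', ee_same]; omega
        · simp [hb', ee_ne htk]
      have hb'min : ∀ t : Fin (n+1), (t : ℕ) < (k : ℕ) → b' t = 0 := by
        intro t ht
        have : b t = 0 := by
          by_contra hbt
          have := hkmin t hbt
          rw [Fin.le_iff_val_le_val] at this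
          omega
        simp [hb', this]
      have hb'supp : ∀ t : Fin (n+1), b' t ≠ 0 → (k : ℕ) ≤ (t : ℕ) := by
        intro t ht
        have hbt : b t ≠ 0 := by
          intro hz; apply ht; simp [hb', hz]
        exact hkmin t hbt
      have hsum' : (∑ t : Fin (n+1), b' t) + 1 = N := by
        have : (∑ t : Fin (n+1), b t) = (∑ t : Fin (n+1), b' t) + (∑ t : Fin (n+1), ee k t) := by
          rw [hbeq]; exact Finset.sum_add_distrib
        rw [this, sum_ee] at hsum; omega
      have hstep : xP h n b = Xg h n k * xP h n b' := by
        rw [hbeq]; exact xP_insert b' k hb'min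
      have hkiFin : k < i := by
        rwa [Fin.lt_iff_val_lt_val]
      -- the inner term
      have hinner : Xg h n i * xP h n b' ∈ SpanM h n (k : ℕ) :=
        IH (N-1) (by omega) (k : ℕ) i b' (le_of_lt hki) hb'supp (by omega)
      have hyx : Yg h n i * xP h n b' = Mon h n (ee i) b' := by
        rw [Mon, yP_single]
      have m1 : Xg h n k * (Xg h n i * xP h n b') ∈ SpanM h n (k : ℕ) :=
        x_mul_span_min k _ hinner
      have m2 : Xg h n k * (Yg h n i * xP h n b') ∈ SpanM h n (k : ℕ) := by
        rw [hyx]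
        exact x_mul_span_min k _ (mon_mem _ _ hb'supp)
      have m3 : Yg h n k * (Xg h n i * xP h n b') ∈ SpanM h n (k : ℕ) :=
        y_mul_span k _ hinner
      have m4 : Yg h n k * (Yg h n i * xP h n b') ∈ SpanM h n (k : ℕ) := by
        rw [hyx, y_mul_mon]
        exact mon_mem _ _ hb'supp
      have expand : Xg h n i * xP h n b
          = Xg h n k * (Xg h n i * xP h n b') - h • (Xg h n k * (Yg h n i * xP h n b'))
            + h • (Yg h n k * (Xg h n i * xP h n b'))
            + (h*h) • (Yg h n k * (Yg h n i * xP h n b')) := by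
        rw [hstep, ← mul_assoc, comm_xx hkiFin]
        simp only [add_mul, sub_mul, smul_mul_assoc, mul_assoc]
      rw [expand]
      have hsub : SpanM h n (k : ℕ) ≤ SpanM h n ℓ := SpanM_mono hℓk
      exact Submodule.add_mem _ (Submodule.add_mem _ (Submodule.sub_mem _ (hsub m1)
        (Submodule.smul_mem _ h (hsub m2))) (Submodule.smul_mem _ h (hsub m3)))
        (Submodule.smul_mem _ (h*h) (hsub m4))

end HProof
namespace HProof

variable {h : ℂ} {n : ℕ}

lemma x_mul_span0 (i : Fin (n+1)) :
    ∀ z ∈ SpanM h n 0, Xg h n i * z ∈ SpanM h n 0 := by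
  apply mul_span_closed
  rintro z ⟨a, b, _, rfl⟩
  obtain ⟨c, hc⟩ := x_mul_yP (h := h) i a
  rw [Mon, ← mul_assoc, hc, add_mul, smul_mul_assoc, mul_assoc, mul_assoc]
  refine (SpanM h n 0).add_mem ?_ ?_
  · -- yP a * (Xg i * xP b) with Xg i * xP b ∈ SpanM 0
    have hx : Xg h n i * xP h n b ∈ SpanM h n 0 :=
      x_mul_xP_mem _ 0 i b (Nat.zero_le _) (fun t _ => Nat.zero_le _) rfl
    -- multiply by yP a on the left, by induction on the total degree of a
    have key : ∀ M : ℕ, ∀ a : Fin (n+1) → ℕ, (∑ t : Fin (n+1), a t) = M →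
        ∀ z ∈ SpanM h n 0, yP h n a * z ∈ SpanM h n 0 := by
      intro M
      induction M using Nat.strong_induction_on with
      | _ M IHM =>
        intro a ha z hz
        by_cases haz : ∀ t : Fin (n+1), a t = 0
        · have : a = fun _ => 0 := funext haz
          rw [this, yP_zero, one_mul]; exact hz
        · push_neg at haz
          obtain ⟨s, hs⟩ := haz
          set a' : Fin (n+1) → ℕ := fun t => a t - ee s t with ha'
          have haeq : a = a' + ee s := by
            funext t
            by_cases hts : t = s
            · subst hts; simp [ha', ee_same]; omega
            · simp [ha', ee_ne hts]
          have hsum' : (∑ t : Fin (n+1), a' t) + 1 = M := by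
            have : (∑ t : Fin (n+1), a t) = (∑ t : Fin (n+1), a' t) + (∑ t : Fin (n+1), ee s t) := by
              rw [haeq]; exact Finset.sum_add_distrib
            rw [this, sum_ee] at ha; omega
          rw [haeq, yP_insert, mul_assoc]
          exact y_mul_span s _ (IHM (M-1) (by omega) a' (by omega) z hz)
    exact key _ a rfl _ hx
  · refine (SpanM h n 0).smul_mem c ?_
    rw [show yP h n a * xP h n b = Mon h n a b from rfl, y_mul_mon]
    exact mon_mem _ _ (fun t _ => Nat.zero_le _)

lemma one_mem_span0 : (1 : HAlg h n) ∈ SpanM h n 0 := by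
  have : (1 : HAlg h n) = Mon h n (fun _ => 0) (fun _ => 0) := by
    rw [Mon, yP_zero, xP_zero, one_mul]
  rw [this]
  exact mon_mem _ _ (fun t ht => absurd rfl ht)

lemma span0_top (z : HAlg h n) : z ∈ SpanM h n 0 := by
  obtain ⟨w, rfl⟩ := RingQuot.mkAlgHom_surjective ℂ (HRel h n) z
  have main : ∀ z ∈ SpanM h n 0,
      RingQuot.mkAlgHom ℂ (HRel h n) w * z ∈ SpanM h n 0 := by
    induction w using FreeAlgebra.induction with
    | grade0 r =>
      intro z hz
      rw [AlgHom.commutes, Algebra.smul_def (A := HAlg h n) r z |>.symm]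
      exact (SpanM h n 0).smul_mem r hz
    | grade1 x =>
      rcases x with ⟨i, bo⟩
      cases bo
      · intro z hz; exact x_mul_span0 i z hz
      · intro z hz; exact y_mul_span i z hz
    | mul p q hp hq =>
      intro z hz
      rw [map_mul, mul_assoc]
      exact hp _ (hq z hz)
    | add p q hp hq =>
      intro z hz
      rw [map_add, add_mul]
      exact (SpanM h n 0).add_mem (hp z hz) (hq z hz)
  simpa using main 1 one_mem_span0

lemma mem_span_range (z : HAlg h n) :
    z ∈ Submodule.span ℂ (Set.range fun p : (Fin (n+1) → ℕ) × (Fin (n+1) → ℕ) =>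
      Mon h n p.1 p.2) := by
  have := span0_top (h := h) (n := n) z
  refine Submodule.span_le.mpr ?_ this
  rintro w ⟨a, b, _, rfl⟩
  exact Submodule.subset_span ⟨(a, b), rfl⟩

lemma exists_finsupp (z : HAlg h n) :
    ∃ f : ((Fin (n+1) → ℕ) × (Fin (n+1) → ℕ)) →₀ ℂ,
      (f.sum fun p c => c • Mon h n p.1 p.2) = z := by
  exact Finsupp.mem_span_range_iff_exists_finsupp.mp (mem_span_range z)

end HProof
namespace HProof

open MvPolynomial

variable {h : ℂ} {n : ℕ}

variable (n) in
abbrev Vp := MvPolynomial (Fin (2*n+2)) ℂ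

variable (n) in
abbrev Mexp := Fin (2*n+2) →₀ ℕ

variable (n) in
/-- Code of the variable `y i`. -/
def cy (i : Fin (n+1)) : Fin (2*n+2) := ⟨2*(i:ℕ)+1, by omega⟩

variable (n) in
/-- Code of the variable `w i`. -/
def cw (i : Fin (n+1)) : Fin (2*n+2) := ⟨2*(i:ℕ), by omega⟩

variable (n) in
def wt : Fin (2*n+2) → ℂ := fun s => if (s : ℕ) % 2 = 1 then 1 else -2

lemma wt_cy (i : Fin (n+1)) : wt n (cy n i) = 1 := by
  have hm : (2*(i:ℕ)+1) % 2 = 1 := by omega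
  simp [wt, cy, hm]

lemma wt_cw (i : Fin (n+1)) : wt n (cw n i) = -2 := by
  have hm : (2*(i:ℕ)) % 2 = 0 := by omega
  simp [wt, cw, hm]

variable (n) in
noncomputable def Th : Vp n →ₗ[ℂ] Vp n :=
  ∑ s : Fin (2*n+2), wt n s • ((LinearMap.mulLeft ℂ (X s)).comp (pderiv s).toLinearMap)

lemma Th_apply (p : Vp n) : Th n p = ∑ s : Fin (2*n+2), wt n s • (X s * pderiv s p) := by
  simp [Th, LinearMap.sum_apply, LinearMap.smul_apply, LinearMap.comp_apply,
    LinearMap.mulLeft_apply]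

lemma Th_X_mul (t : Fin (2*n+2)) (p : Vp n) :
    Th n (X t * p) = X t * Th n p + wt n t • (X t * p) := by
  rw [Th_apply, Th_apply]
  have step : ∀ s : Fin (2*n+2), wt n s • (X s * pderiv s (X t * p))
      = wt n s • (X s * (pderiv s (X t) * p)) + X t * (wt n s • (X s * pderiv s p)) := by
    intro s
    rw [pderiv_mul, mul_add, smul_add]
    congr 1
    rw [mul_smul_comm, mul_left_comm]
  rw [Finset.sum_congr rfl (fun s _ => step s), Finset.sum_add_distrib, ← Finset.mul_sum]
  have h1 : (∑ s : Fin (2*n+2), wt n s • (X s * (pderiv s (X t) * p))) = wt n t • (X t * p) := by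
    rw [Finset.sum_eq_single t]
    · simp
    · intro s _ hst
      rw [pderiv_X_of_ne (Ne.symm hst)]
      simp
    · intro habs; exact absurd (Finset.mem_univ t) habs
  rw [h1, add_comm]

variable (n) in
noncomputable def wgt (μ : Mexp n) : ℂ := ∑ s : Fin (2*n+2), (μ s : ℂ) * wt n s

lemma Th_monomial (μ : Mexp n) (c : ℂ) :
    Th n (monomial μ c) = wgt n μ • monomial μ c := by
  rw [Th_apply, wgt, Finset.sum_smul]
  refine Finset.sum_congr rfl (fun s _ => ?_)
  rw [pderiv_monomial]
  by_cases hμ : μ s = 0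
  · simp [hμ]
  · have hX : (X s : Vp n) = monomial (Finsupp.single s 1) 1 := rfl
    rw [hX, monomial_mul, one_mul]
    have hadd : Finsupp.single s 1 + (μ - Finsupp.single s 1) = μ := by
      rw [add_tsub_cancel_of_le]
      rw [Finsupp.single_le_iff]
      omega
    rw [hadd]
    simp only [smul_monomial, smul_smul, smul_eq_mul]
    congr 1
    ring

lemma Th_coeff (ν : Mexp n) (p : Vp n) :
    coeff ν (Th n p) = wgt n ν * coeff ν p := by
  induction p using MvPolynomial.induction_on' with
  | monomial μ c =>
    rw [Th_monomial, coeff_smul]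
    by_cases hm : μ = ν
    · subst hm; simp [coeff_monomial]
    · simp [coeff_monomial, hm]
  | add p q hp hq =>
    rw [map_add, coeff_add, coeff_add, hp, hq, mul_add]

variable (n) in
noncomputable def Aop (i : Fin (n+1)) : Module.End ℂ (Vp n) :=
  LinearMap.mulLeft ℂ (X (cy n i))

variable (h n) in
noncomputable def Xop (i : Fin (n+1)) : Module.End ℂ (Vp n) :=
  (LinearMap.mulLeft ℂ (X (cy n i))) * (h • Th n + LinearMap.mulLeft ℂ (X (cw n i)))

lemma Aop_apply (i : Fin (n+1)) (p : Vp n) : Aop n i p = X (cy n i) * p := rfl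

lemma Xop_apply (i : Fin (n+1)) (p : Vp n) :
    Xop h n i p = h • (X (cy n i) * Th n p) + X (cy n i) * (X (cw n i) * p) := by
  simp [Xop, Module.End.mul_apply, LinearMap.add_apply, LinearMap.smul_apply,
    LinearMap.mulLeft_apply, mul_add, mul_smul_comm]

lemma Th_y_mul (i : Fin (n+1)) (p : Vp n) :
    Th n (X (cy n i) * p) = X (cy n i) * Th n p + X (cy n i) * p := by
  have := Th_X_mul (cy n i) p
  rw [this, wt_cy, one_smul]

lemma Th_w_mul (i : Fin (n+1)) (p : Vp n) :
    Th n (X (cw n i) * p) = X (cw n i) * Th n p - (2:ℂ) • (X (cw n i) * p) := by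
  have := Th_X_mul (cw n i) p
  rw [this, wt_cw]
  simp [sub_eq_add_neg, neg_smul]

lemma Rel_diag (i : Fin (n+1)) :
    Xop h n i * Aop n i = Aop n i * Xop h n i + h • (Aop n i * Aop n i) := by
  apply LinearMap.ext
  intro p
  simp only [Module.End.mul_apply, LinearMap.add_apply, LinearMap.sub_apply,
    LinearMap.smul_apply, Aop_apply, Xop_apply, map_add, map_smul, Th_y_mul, Th_w_mul,
    smul_add, smul_sub, mul_add, mul_sub]
  simp only [smul_eq_C_mul, map_mul, map_pow, map_ofNat]
  ring

lemma Rel_xy {i j : Fin (n+1)} :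
    Xop h n j * Aop n i = Aop n i * Xop h n j + h • (Aop n i * Aop n j) := by
  apply LinearMap.ext
  intro p
  simp only [Module.End.mul_apply, LinearMap.add_apply, LinearMap.sub_apply,
    LinearMap.smul_apply, Aop_apply, Xop_apply, map_add, map_smul, Th_y_mul, Th_w_mul,
    smul_add, smul_sub, mul_add, mul_sub]
  simp only [smul_eq_C_mul, map_mul, map_pow, map_ofNat]
  ring

lemma Rel_yx {i j : Fin (n+1)} :
    Aop n j * Xop h n i = Xop h n i * Aop n j - h • (Aop n i * Aop n j) := by
  apply LinearMap.ext
  intro p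
  simp only [Module.End.mul_apply, LinearMap.add_apply, LinearMap.sub_apply,
    LinearMap.smul_apply, Aop_apply, Xop_apply, map_add, map_smul, Th_y_mul, Th_w_mul,
    smul_add, smul_sub, mul_add, mul_sub]
  simp only [smul_eq_C_mul, map_mul, map_pow, map_ofNat]
  ring

lemma Rel_yy {i j : Fin (n+1)} :
    Aop n j * Aop n i = Aop n i * Aop n j := by
  apply LinearMap.ext
  intro p
  simp only [Module.End.mul_apply, Aop_apply]
  ring

lemma Rel_xx {i j : Fin (n+1)} :
    Xop h n j * Xop h n i = Xop h n i * Xop h n j - h • (Xop h n i * Aop n j)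
      + h • (Aop n i * Xop h n j) + (h * h) • (Aop n i * Aop n j) := by
  apply LinearMap.ext
  intro p
  simp only [Module.End.mul_apply, LinearMap.add_apply, LinearMap.sub_apply,
    LinearMap.smul_apply, Aop_apply, Xop_apply, map_add, map_smul, Th_y_mul, Th_w_mul,
    smul_add, smul_sub, mul_add, mul_sub]
  simp only [smul_eq_C_mul, map_mul, map_pow, map_ofNat]
  ring

variable (h n) in
noncomputable def fgen : HGen n → Module.End ℂ (Vp n) :=
  fun s => if s.2 then Aop n s.1 else Xop h n s.1

variable (h n) in
noncomputable def Fq : FreeAlgebra ℂ (HGen n) →ₐ[ℂ] Module.End ℂ (Vp n) :=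
  FreeAlgebra.lift ℂ (fgen h n)

lemma Fq_rel : ∀ ⦃a b : FreeAlgebra ℂ (HGen n)⦄, HRel h n a b → Fq h n a = Fq h n b := by
  intro a b r
  induction r with
  | diag i =>
    simp only [Fq, map_mul, map_add, map_smul, FreeAlgebra.lift_ι_apply, fgen]
    simpa using Rel_diag (h := h) i
  | xy hij =>
    simp only [Fq, map_mul, map_add, map_smul, FreeAlgebra.lift_ι_apply, fgen]
    simpa using Rel_xy (h := h)
  | yx hij =>
    simp only [Fq, map_mul, map_sub, map_smul, FreeAlgebra.lift_ι_apply, fgen]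
    simpa using Rel_yx (h := h)
  | yy hij =>
    simp only [Fq, map_mul, FreeAlgebra.lift_ι_apply, fgen]
    simpa using Rel_yy (n := n)
  | xx hij =>
    simp only [Fq, map_mul, map_add, map_sub, map_smul, FreeAlgebra.lift_ι_apply, fgen]
    simpa using Rel_xx (h := h)

variable (h n) in
noncomputable def Φ : HAlg h n →ₐ[ℂ] Module.End ℂ (Vp n) :=
  RingQuot.liftAlgHom ℂ ⟨Fq h n, Fq_rel⟩

lemma Φ_Y (i : Fin (n+1)) : Φ h n (Yg h n i) = Aop n i := by
  rw [Yg, Φ, RingQuot.liftAlgHom_mkAlgHom_apply]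
  simp [Fq, fgen]

lemma Φ_X (i : Fin (n+1)) : Φ h n (Xg h n i) = Xop h n i := by
  rw [Xg, Φ, RingQuot.liftAlgHom_mkAlgHom_apply]
  simp [Fq, fgen]

end HProof
namespace HProof

open MvPolynomial

variable {h : ℂ} {n : ℕ}

lemma toLex_zero_le (μ : Mexp n) : (toLex (0 : Mexp n)) ≤ toLex μ :=
  Finsupp.toLex_monotone (by intro s; simp)

lemma toLex_zero_lt {μ : Mexp n} (hμ : μ ≠ 0) : (toLex (0 : Mexp n)) < toLex μ :=
  lt_of_le_of_ne (toLex_zero_le μ) (fun hc => hμ (toLex.injective hc).symm)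

lemma toLex_lt_add_left {μ : Mexp n} (hμ : μ ≠ 0) (ν : Mexp n) :
    toLex ν < toLex (μ + ν) := by
  have h0 : toLex (0 : Mexp n) < toLex μ := toLex_zero_lt hμ
  calc toLex ν = toLex (0 : Mexp n) + toLex ν := by
        rw [← toLex_add, zero_add]
    _ < toLex μ + toLex ν := add_lt_add_left h0 _
    _ = toLex (μ + ν) := (toLex_add _ _).symm

lemma toLex_le_add_left (μ ν : Mexp n) : toLex ν ≤ toLex (μ + ν) := by
  rcases eq_or_ne μ 0 with rfl | hμ
  · simp
  · exact le_of_lt (toLex_lt_add_left hμ ν)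

lemma toLex_add_le_add_left {ν ν' : Mexp n} (σ : Mexp n) (hv : toLex ν ≤ toLex ν') :
    toLex (σ + ν) ≤ toLex (σ + ν') := by
  rw [toLex_add, toLex_add]
  exact add_le_add_right hv _

/-- Leading monomial of a polynomial w.r.t. lex order. -/
noncomputable def ld (p : Vp n) : Mexp n :=
  if hp : p = 0 then 0
  else ofLex ((p.support.image (toLex : Mexp n → Lex (Mexp n))).max'
    (by
      refine Finset.image_nonempty.mpr ?_
      exact MvPolynomial.support_nonempty.mpr hp))

lemma ld_coeff_ne {p : Vp n} (hp : p ≠ 0) : MvPolynomial.coeff (ld p) p ≠ 0 := by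
  rw [ld, dif_neg hp]
  have hmem := (p.support.image (toLex : Mexp n → Lex (Mexp n))).max'_mem
    (Finset.image_nonempty.mpr (MvPolynomial.support_nonempty.mpr hp))
  rw [Finset.mem_image] at hmem
  obtain ⟨μ, hμ, hμeq⟩ := hmem
  rw [← hμeq]
  simpa [MvPolynomial.mem_support_iff] using hμ

lemma ld_ge {p : Vp n} {μ : Mexp n} (hμ : MvPolynomial.coeff μ p ≠ 0) :
    toLex μ ≤ toLex (ld p) := by
  have hp : p ≠ 0 := fun hz => hμ (by simp [hz])
  rw [ld, dif_neg hp]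
  have : toLex μ ∈ p.support.image (toLex : Mexp n → Lex (Mexp n)) :=
    Finset.mem_image_of_mem _ (by simpa [MvPolynomial.mem_support_iff] using hμ)
  simpa using Finset.le_max' _ _ this

lemma coeff_eq_zero_of_lt {p : Vp n} {μ : Mexp n} (hμ : toLex (ld p) < toLex μ) :
    MvPolynomial.coeff μ p = 0 := by
  by_contra hc
  exact absurd (ld_ge hc) (not_le.mpr hμ)

variable (n) in
/-- Triangularity of an operator with respect to the lex order, with shift `σ`. -/
def Tri (f : Module.End ℂ (Vp n)) (σ : Mexp n) : Prop :=
  (∀ p μ, MvPolynomial.coeff μ (f p) ≠ 0 →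
      ∃ ν, MvPolynomial.coeff ν p ≠ 0 ∧ toLex μ ≤ toLex (σ + ν)) ∧
  (∀ p, MvPolynomial.coeff (σ + ld p) (f p) = MvPolynomial.coeff (ld p) p)

lemma tri_one : Tri n (1 : Module.End ℂ (Vp n)) 0 := by
  constructor
  · intro p μ hμ
    exact ⟨μ, by simpa using hμ, by simp⟩
  · intro p; simp

lemma tri_mul {f g : Module.End ℂ (Vp n)} {σ τ : Mexp n}
    (hf : Tri n f σ) (hg : Tri n g τ) : Tri n (f * g) (σ + τ) := by
  constructor
  · intro p μ hμ
    rw [Module.End.mul_apply] at hμ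
    obtain ⟨ν, hν, hle⟩ := hf.1 (g p) μ hμ
    obtain ⟨ρ, hρ, hle'⟩ := hg.1 p ν hν
    refine ⟨ρ, hρ, ?_⟩
    calc toLex μ ≤ toLex (σ + ν) := hle
      _ ≤ toLex (σ + (τ + ρ)) := toLex_add_le_add_left σ hle'
      _ = toLex (σ + τ + ρ) := by rw [add_assoc]
  · intro p
    rw [Module.End.mul_apply]
    rcases eq_or_ne p 0 with rfl | hp
    · simp
    · have hgl : MvPolynomial.coeff (τ + ld p) (g p) = MvPolynomial.coeff (ld p) p := hg.2 p
      have hgp : g p ≠ 0 := by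
        intro hz
        rw [hz] at hgl
        exact ld_coeff_ne hp (by simpa using hgl.symm)
      have hld : ld (g p) = τ + ld p := by
        have hmax : ∀ μ, MvPolynomial.coeff μ (g p) ≠ 0 → toLex μ ≤ toLex (τ + ld p) := by
          intro μ hμ
          obtain ⟨ν, hν, hle⟩ := hg.1 p μ hμ
          exact le_trans hle (toLex_add_le_add_left τ (ld_ge hν))
        have h1 : toLex (ld (g p)) ≤ toLex (τ + ld p) := hmax _ (ld_coeff_ne hgp)
        have h2 : toLex (τ + ld p) ≤ toLex (ld (g p)) := ld_ge (by rw [hgl]; exact ld_coeff_ne hp)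
        exact toLex.injective (le_antisymm h1 h2)
      rw [add_assoc, ← hld, hf.2 (g p), hld, hgl]

lemma tri_pow {f : Module.End ℂ (Vp n)} {σ : Mexp n} (hf : Tri n f σ) :
    ∀ m : ℕ, Tri n (f ^ m) (m • σ) := by
  intro m
  induction m with
  | zero => simpa using tri_one
  | succ m ih =>
    have := tri_mul ih hf
    rw [← pow_succ] at this
    simpa [succ_nsmul] using this

end HProof
namespace HProof

open MvPolynomial

variable {h : ℂ} {n : ℕ}

lemma single_decomp {s : Fin (2*n+2)} {μ : Mexp n} (hs : s ∈ μ.support) :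
    Finsupp.single s 1 + (μ - Finsupp.single s 1) = μ := by
  rw [add_tsub_cancel_of_le]
  rw [Finsupp.single_le_iff]
  rw [Finsupp.mem_support_iff] at hs
  omega

lemma tri_Aop (i : Fin (n+1)) : Tri n (Aop n i) (Finsupp.single (cy n i) 1) := by
  constructor
  · intro p μ hμ
    rw [Aop_apply, coeff_X_mul'] at hμ
    split_ifs at hμ with hs
    · refine ⟨μ - Finsupp.single (cy n i) 1, hμ, ?_⟩
      rw [single_decomp hs]
    · exact absurd rfl hμ
  · intro p
    rw [Aop_apply, coeff_X_mul]

lemma tri_Xop (i : Fin (n+1)) :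
    Tri n (Xop h n i) (Finsupp.single (cy n i) 1 + Finsupp.single (cw n i) 1) := by
  have hwne : (Finsupp.single (cw n i) 1 : Mexp n) ≠ 0 := by
    intro hz
    have := congrFun (congrArg (fun f : Mexp n => (f : Fin (2*n+2) → ℕ)) hz) (cw n i)
    simp at this
  constructor
  · intro p μ hμ
    rw [Xop_apply] at hμ
    rw [coeff_add, coeff_smul] at hμ
    rcases (by
      by_contra hc
      push_neg at hc
      rw [hc.1, hc.2] at hμ; simp at hμ :
        h • coeff μ (X (cy n i) * Th n p) ≠ 0 ∨ coeff μ (X (cy n i) * (X (cw n i) * p)) ≠ 0)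
      with hca | hcb
    · have hca' : coeff μ (X (cy n i) * Th n p) ≠ 0 := by
        intro hz; rw [hz] at hca; simp at hca
      rw [coeff_X_mul'] at hca'
      split_ifs at hca' with hs
      · set ν' := μ - Finsupp.single (cy n i) 1 with hν'
        have hth : coeff ν' p ≠ 0 := by
          intro hz
          rw [Th_coeff, hz, mul_zero] at hca'
          exact hca' rfl
        refine ⟨ν', hth, ?_⟩
        have hμeq : μ = Finsupp.single (cy n i) 1 + ν' := (single_decomp hs).symm
        rw [hμeq, add_assoc]
        exact toLex_add_le_add_left _ (toLex_le_add_left _ _)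
      · exact absurd rfl hca'
    · rw [coeff_X_mul'] at hcb
      split_ifs at hcb with hs
      · rw [coeff_X_mul'] at hcb
        split_ifs at hcb with hs2
        · refine ⟨μ - Finsupp.single (cy n i) 1 - Finsupp.single (cw n i) 1, hcb, ?_⟩
          rw [add_assoc, single_decomp hs2, single_decomp hs]
        · exact absurd rfl hcb
      · exact absurd rfl hcb
  · intro p
    rw [Xop_apply, coeff_add, coeff_smul]
    have hterm1 : coeff (Finsupp.single (cy n i) 1 + Finsupp.single (cw n i) 1 + ld p)
        (X (cy n i) * Th n p) = 0 := by
      rw [add_assoc, coeff_X_mul, Th_coeff]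
      rw [coeff_eq_zero_of_lt (toLex_lt_add_left hwne (ld p)), mul_zero]
    rw [hterm1, smul_zero, zero_add, add_assoc, coeff_X_mul, coeff_X_mul]

end HProof
namespace HProof

open MvPolynomial

variable {h : ℂ} {n : ℕ}

lemma cy_inj {i j : Fin (n+1)} (hij : cy n i = cy n j) : i = j := by
  have := congrArg Fin.val hij
  simp only [cy] at this
  exact Fin.ext (by omega)

lemma cw_inj {i j : Fin (n+1)} (hij : cw n i = cw n j) : i = j := by
  have := congrArg Fin.val hij
  simp only [cw] at this
  exact Fin.ext (by omega)

lemma cy_ne_cw (i j : Fin (n+1)) : cy n i ≠ cw n j := by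
  intro hc
  have := congrArg Fin.val hc
  simp only [cy, cw] at this
  omega

variable (n) in
noncomputable def toM (a b : Fin (n+1) → ℕ) : Mexp n :=
  (∑ t : Fin (n+1), Finsupp.single (cy n t) (a t + b t)) +
    ∑ t : Fin (n+1), Finsupp.single (cw n t) (b t)

lemma toM_cy (a b : Fin (n+1) → ℕ) (i : Fin (n+1)) : toM n a b (cy n i) = a i + b i := by
  rw [toM, Finsupp.add_apply, Finsupp.finset_sum_apply, Finsupp.finset_sum_apply]
  have h1 : (∑ t : Fin (n+1), Finsupp.single (cy n t) (a t + b t) (cy n i)) = a i + b i := by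
    rw [Finset.sum_eq_single i]
    · simp
    · intro t _ hti
      rw [Finsupp.single_apply, if_neg (fun hc => hti (cy_inj hc))]
    · intro habs; exact absurd (Finset.mem_univ i) habs
  have h2 : (∑ t : Fin (n+1), Finsupp.single (cw n t) (b t) (cy n i)) = 0 := by
    refine Finset.sum_eq_zero (fun t _ => ?_)
    rw [Finsupp.single_apply, if_neg (fun hc => cy_ne_cw i t hc.symm)]
  rw [h1, h2, add_zero]

lemma toM_cw (a b : Fin (n+1) → ℕ) (i : Fin (n+1)) : toM n a b (cw n i) = b i := by
  rw [toM, Finsupp.add_apply, Finsupp.finset_sum_apply, Finsupp.finset_sum_apply]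
  have h1 : (∑ t : Fin (n+1), Finsupp.single (cy n t) (a t + b t) (cw n i)) = 0 := by
    refine Finset.sum_eq_zero (fun t _ => ?_)
    rw [Finsupp.single_apply, if_neg (fun hc => cy_ne_cw t i hc)]
  have h2 : (∑ t : Fin (n+1), Finsupp.single (cw n t) (b t) (cw n i)) = b i := by
    rw [Finset.sum_eq_single i]
    · simp
    · intro t _ hti
      rw [Finsupp.single_apply, if_neg (fun hc => hti (cw_inj hc))]
    · intro habs; exact absurd (Finset.mem_univ i) habs
  rw [h1, h2, zero_add]

lemma toM_inj {a b a' b' : Fin (n+1) → ℕ} (he : toM n a b = toM n a' b') :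
    a = a' ∧ b = b' := by
  have hb : b = b' := by
    funext i
    have := congrArg (fun f : Mexp n => f (cw n i)) he
    simpa [toM_cw] using this
  refine ⟨?_, hb⟩
  funext i
  have := congrArg (fun f : Mexp n => f (cy n i)) he
  change toM n a b (cy n i) = toM n a' b' (cy n i) at this
  rw [toM_cy, toM_cy, hb] at this
  omega

variable (n) in
noncomputable def esY : Fin (n+1) → Mexp n := fun t => Finsupp.single (cy n t) 1

variable (n) in
noncomputable def esX : Fin (n+1) → Mexp n :=
  fun t => Finsupp.single (cy n t) 1 + Finsupp.single (cw n t) 1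

variable (n) in
noncomputable def σF (es : Fin (n+1) → Mexp n) (c : Fin (n+1) → ℕ) : ℕ → Mexp n
  | 0 => 0
  | j+1 => c ⟨n - j, by omega⟩ • es ⟨n - j, by omega⟩ + σF es c j

lemma tri_gF (g : Fin (n+1) → HAlg h n) (es : Fin (n+1) → Mexp n)
    (hg : ∀ t, Tri n (Φ h n (g t)) (es t)) (c : Fin (n+1) → ℕ) :
    ∀ j, Tri n (Φ h n (gF g c j)) (σF n es c j) := by
  intro j
  induction j with
  | zero =>
    rw [show gF g c 0 = 1 from rfl, map_one]
    exact tri_one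
  | succ j ih =>
    rw [gF, map_mul, map_pow]
    exact tri_mul (tri_pow (hg _) _) ih

lemma σF_eq (es : Fin (n+1) → Mexp n) (c : Fin (n+1) → ℕ) :
    ∀ j, j ≤ n+1 → σF n es c j
      = ∑ t ∈ Finset.univ.filter (fun t : Fin (n+1) => n+1-j ≤ (t:ℕ)), c t • es t := by
  intro j
  induction j with
  | zero =>
    intro _
    rw [show σF n es c 0 = 0 from rfl]
    rw [Finset.sum_eq_zero]
    intro t ht
    rw [Finset.mem_filter] at ht
    exact absurd ht.2 (by have := t.isLt; omega)
  | succ j ih =>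
    intro hj
    have hset : (Finset.univ.filter (fun t : Fin (n+1) => n+1-(j+1) ≤ (t:ℕ)))
        = insert (⟨n - j, by omega⟩ : Fin (n+1))
            (Finset.univ.filter (fun t : Fin (n+1) => n+1-j ≤ (t:ℕ))) := by
      ext t
      simp only [Finset.mem_filter, Finset.mem_insert, Finset.mem_univ, true_and]
      constructor
      · intro ht
        rcases eq_or_ne (t : ℕ) (n - j) with he | hne
        · exact Or.inl (Fin.ext he)
        · exact Or.inr (by omega)
      · rintro (rfl | ht)
        · show n+1-(j+1) ≤ n - j
          omega
        · omega
    rw [σF, hset, Finset.sum_insert (by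
      rw [Finset.mem_filter]
      rintro ⟨-, hc⟩
      simp at hc
      omega), ih (by omega)]

lemma σF_univ (es : Fin (n+1) → Mexp n) (c : Fin (n+1) → ℕ) :
    σF n es c (n+1) = ∑ t : Fin (n+1), c t • es t := by
  rw [σF_eq es c (n+1) le_rfl]
  congr 1
  refine Finset.filter_true_of_mem (fun t _ => by omega)

lemma sigma_toM (a b : Fin (n+1) → ℕ) :
    σF n (esY n) a (n+1) + σF n (esX n) b (n+1) = toM n a b := by
  rw [σF_univ, σF_univ, toM]
  have h1 : ∀ t : Fin (n+1), a t • esY n t = Finsupp.single (cy n t) (a t) := by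
    intro t
    simp [esY, Finsupp.smul_single]
  have h2 : ∀ t : Fin (n+1), b t • esX n t
      = Finsupp.single (cy n t) (b t) + Finsupp.single (cw n t) (b t) := by
    intro t
    simp [esX, smul_add, Finsupp.smul_single]
  rw [Finset.sum_congr rfl (fun t _ => h1 t), Finset.sum_congr rfl (fun t _ => h2 t),
    Finset.sum_add_distrib]
  have h3 : (∑ t : Fin (n+1), Finsupp.single (cy n t) (a t + b t))
      = (∑ t : Fin (n+1), Finsupp.single (cy n t) (a t))
        + ∑ t : Fin (n+1), Finsupp.single (cy n t) (b t) := by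
    rw [← Finset.sum_add_distrib]
    exact Finset.sum_congr rfl (fun t _ => Finsupp.single_add _ _ _)
  rw [h3]
  abel

lemma tri_Mon (a b : Fin (n+1) → ℕ) :
    Tri n (Φ h n (Mon h n a b)) (toM n a b) := by
  rw [Mon, map_mul, ← sigma_toM]
  refine tri_mul ?_ ?_
  · exact tri_gF (Yg h n) (esY n) (fun t => by rw [Φ_Y]; exact tri_Aop t) a (n+1)
  · exact tri_gF (Xg h n) (esX n) (fun t => by rw [Φ_X]; exact tri_Xop t) b (n+1)

end HProof
namespace HProof

open MvPolynomial

variable {h : ℂ} {n : ℕ}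

abbrev Idx (n : ℕ) := (Fin (n+1) → ℕ) × (Fin (n+1) → ℕ)

lemma key (f : Idx n →₀ ℂ) (hf : f ≠ 0) (v : Vp n) (hv : v ≠ 0) :
    (f.sum fun p c => c • Φ h n (Mon h n p.1 p.2)) v ≠ 0 := by
  classical
  -- the maximal shift
  have hsupp : f.support.Nonempty := Finsupp.support_nonempty_iff.mpr hf
  set T := f.support.image (fun p : Idx n => toLex (toM n p.1 p.2)) with hT
  have hTne : T.Nonempty := Finset.image_nonempty.mpr hsupp
  obtain ⟨p₀, hp₀, hp₀max⟩ := Finset.mem_image.mp (T.max'_mem hTne)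
  have hmax : ∀ p ∈ f.support, toLex (toM n p.1 p.2) ≤ toLex (toM n p₀.1 p₀.2) := by
    intro p hp
    have hmem : toLex (toM n p.1 p.2) ∈ T := Finset.mem_image_of_mem _ hp
    have h2 : toLex (toM n p.1 p.2) ≤ T.max' hTne := Finset.le_max' T _ hmem
    rw [hp₀max]
    exact h2
  set μ₀ := toM n p₀.1 p₀.2 + ld v with hμ₀
  intro hzero
  have hco : coeff μ₀ ((f.sum fun p c => c • Φ h n (Mon h n p.1 p.2)) v) = 0 := by
    rw [hzero]; simp
  rw [Finsupp.sum, LinearMap.sum_apply, coeff_sum] at hco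
  have hsingle : ∀ p ∈ f.support, p ≠ p₀ →
      coeff μ₀ ((f p • Φ h n (Mon h n p.1 p.2)) v) = 0 := by
    intro p hp hne
    rw [LinearMap.smul_apply, coeff_smul]
    have hz : coeff μ₀ (Φ h n (Mon h n p.1 p.2) v) = 0 := by
      by_contra hc
      obtain ⟨ν, hν, hle⟩ := (tri_Mon (h := h) p.1 p.2).1 v μ₀ hc
      have hlt : toLex (toM n p.1 p.2) < toLex (toM n p₀.1 p₀.2) := by
        refine lt_of_le_of_ne (hmax p hp) (fun hc2 => ?_)
        obtain ⟨h1, h2⟩ := toM_inj (toLex.injective hc2)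
        exact hne (Prod.ext h1 h2)
      have hchain : toLex μ₀ ≤ toLex (toM n p.1 p.2 + ld v) :=
        le_trans hle (toLex_add_le_add_left _ (ld_ge hν))
      have hstrict : toLex (toM n p.1 p.2 + ld v) < toLex μ₀ := by
        rw [hμ₀, toLex_add, toLex_add]
        exact add_lt_add_left hlt _
      exact absurd hchain (not_le.mpr hstrict)
    rw [hz, smul_zero]
  rw [Finset.sum_eq_single p₀ hsingle (fun habs => absurd hp₀ habs)] at hco
  rw [LinearMap.smul_apply, coeff_smul, hμ₀, (tri_Mon (h := h) p₀.1 p₀.2).2 v] at hco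
  have hfp₀ : f p₀ ≠ 0 := Finsupp.mem_support_iff.mp hp₀
  exact (mul_ne_zero hfp₀ (ld_coeff_ne hv)) (by simpa using hco)

end HProof


/-- The `h`-deformed algebra `H_n` has no zero divisors: it is a domain. -/
theorem HAlg_noZeroDivisors (h : ℂ) (n : ℕ) :
    ∀ a b : HAlg h n, a * b = 0 → a = 0 ∨ b = 0 := by
  classical
  intro a b hab
  by_contra hcon
  push_neg at hcon
  obtain ⟨ha, hb⟩ := hcon
  obtain ⟨fa, hfa⟩ := HProof.exists_finsupp a
  obtain ⟨fb, hfb⟩ := HProof.exists_finsupp b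
  have hfa0 : fa ≠ 0 := by
    rintro rfl
    exact ha (by simpa using hfa.symm)
  have hfb0 : fb ≠ 0 := by
    rintro rfl
    exact hb (by simpa using hfb.symm)
  have hΦa : HProof.Φ h n a = fa.sum fun p c => c • HProof.Φ h n (HProof.Mon h n p.1 p.2) := by
    rw [← hfa, map_finsuppSum]
    exact Finsupp.sum_congr (fun p _ => map_smul _ _ _)
  have hΦb : HProof.Φ h n b = fb.sum fun p c => c • HProof.Φ h n (HProof.Mon h n p.1 p.2) := by
    rw [← hfb, map_finsuppSum]
    exact Finsupp.sum_congr (fun p _ => map_smul _ _ _)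
  have hv1 : (1 : HProof.Vp n) ≠ 0 := one_ne_zero
  have hw : HProof.Φ h n b 1 ≠ 0 := by
    rw [hΦb]
    exact HProof.key fb hfb0 1 hv1
  have hfinal : HProof.Φ h n a (HProof.Φ h n b 1) ≠ 0 := by
    rw [hΦa]
    exact HProof.key fa hfa0 _ hw
  apply hfinal
  have : HProof.Φ h n a (HProof.Φ h n b 1) = (HProof.Φ h n a * HProof.Φ h n b) 1 := rfl
  rw [this, ← map_mul, hab, map_zero]
  simp
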